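/- For all real numbers a, b > 0 with a ≠ b and all v ∈ (0,1), one has I_v(a,b) ≤ (a∇_{v/2} b)^{1−v}·(a∇_{(1+v)/2} b)^{v} ≤ a∇_v b. -/

import Mathlib

/-- The logarithmic mean of two positive reals. -/
noncomputable def logMean (a b : ℝ) : ℝ :=
  if a = b then a else (b - a) / (Real.log b - Real.log a)

/-- The identric mean of two positive reals. -/
noncomputable def idMean (a b : ℝ) : ℝ :=
  if a = b then a else Real.exp (-1) * (b ^ b / a ^ a) ^ (b - a)⁻¹

/-- The weighted arithmetic mean `a ∇_v b`. -/
def wArith (v a b : ℝ) : ℝ := (1 - v) * a + v * b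

/-- The weighted geometric mean `a ♯_v b`. -/
noncomputable def wGeom (v a b : ℝ) : ℝ := a ^ (1 - v) * b ^ v

/-- The weighted harmonic mean `a !_v b`. -/
noncomputable def wHarm (v a b : ℝ) : ℝ := ((1 - v) / a + v / b)⁻¹

/-- The weighted logarithmic mean `L_v(a,b)` (for `a ≠ b`, `v ∈ (0,1)`). -/
noncomputable def wLog (v a b : ℝ) : ℝ :=
  (1 / (Real.log a - Real.log b)) *
    (((1 - v) / v) * (a - a ^ (1 - v) * b ^ v) + (v / (1 - v)) * (a ^ (1 - v) * b ^ v - b))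

/-- The weighted identric mean `I_v(a,b)` (for `a ≠ b`, `v ∈ (0,1)`). -/
noncomputable def wId (v a b : ℝ) : ℝ :=
  Real.exp (-1) * wArith v a b ^ ((1 - 2 * v) * wArith v a b / (v * (1 - v) * (b - a))) *
    (b ^ (v * b / (1 - v)) / a ^ ((1 - v) * a / v)) ^ (b - a)⁻¹

/-- Hermite–Hadamard for `log`: the integral of `log` over `[x,y]` is at most
`(y-x)` times the log of the midpoint. -/
lemma wId_key {x y : ℝ} (hx : 0 < x) (hxy : x < y) :
    y * Real.log y - x * Real.log x - (y - x) ≤ (y - x) * Real.log ((x + y) / 2) := by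
  have hy : 0 < y := hx.trans hxy
  have hInt : ∫ t in x..y, Real.log t = y * Real.log y - x * Real.log x - y + x := by
    apply integral_log
  have hInt2 : ∫ t in x..y, Real.log (x + y - t) = ∫ t in x..y, Real.log t := by
    have := intervalIntegral.integral_comp_sub_left (a := x) (b := y) Real.log (x + y)
    simpa [show x + y - y = x by ring, show x + y - x = y by ring] using this
  have hcont : ContinuousOn Real.log (Set.uIcc x y) := by
    apply Real.continuousOn_log.mono
    intro t ht
    rcases Set.mem_uIcc.mp ht with ⟨h1, _⟩ | ⟨h1, _⟩ <;> simp <;> nlinarith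
  have hI1 : IntervalIntegrable Real.log MeasureTheory.volume x y :=
    hcont.intervalIntegrable
  have hI2 : IntervalIntegrable (fun t => Real.log (x + y - t)) MeasureTheory.volume x y := by
    apply ContinuousOn.intervalIntegrable
    apply Real.continuousOn_log.comp (by fun_prop)
    intro t ht
    rcases Set.mem_uIcc.mp ht with ⟨h1, h2⟩ | ⟨h1, h2⟩ <;> simp <;> nlinarith
  have hmono : ∫ t in x..y, (Real.log t + Real.log (x + y - t)) ≤
      ∫ t in x..y, (2 * Real.log ((x + y) / 2)) := by
    apply intervalIntegral.integral_mono_on hxy.le (hI1.add hI2)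
      intervalIntegrable_const
    intro t ht
    have ht1 : 0 < t := lt_of_lt_of_le hx ht.1
    have ht2 : 0 < x + y - t := by nlinarith [ht.2]
    rw [← Real.log_mul ht1.ne' ht2.ne']
    have h2 : Real.log ((x + y) / 2 * ((x + y) / 2)) = 2 * Real.log ((x + y) / 2) := by
      rw [Real.log_mul (by positivity) (by positivity)]; ring
    rw [← h2]
    apply Real.log_le_log (by positivity)
    nlinarith [sq_nonneg (t - (x + y) / 2)]
  rw [intervalIntegral.integral_add hI1 hI2, hInt2, hInt,
    intervalIntegral.integral_const] at hmono
  simp at hmono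
  nlinarith [hmono]

lemma wId_aux {x y w : ℝ} (hx : 0 < x) (hxy : x < y) (hw0 : 0 < w) (hw1 : w < 1) :
    (((1 - w) / w) * (((1 - w) * x + w * y) * Real.log ((1 - w) * x + w * y)
        - x * Real.log x - (((1 - w) * x + w * y) - x))
      + (w / (1 - w)) * (y * Real.log y
        - ((1 - w) * x + w * y) * Real.log ((1 - w) * x + w * y)
        - (y - ((1 - w) * x + w * y)))) / (y - x)
    ≤ (1 - w) * Real.log ((x + ((1 - w) * x + w * y)) / 2)
      + w * Real.log ((((1 - w) * x + w * y) + y) / 2) := by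
  set m : ℝ := (1 - w) * x + w * y with hm
  have hw1' : 0 < 1 - w := by linarith
  have hm1 : x < m := by nlinarith
  have hm2 : m < y := by nlinarith
  have K1 := wId_key hx hm1
  have K2 := wId_key (hx.trans hm1) hm2
  set LX := Real.log ((x + m) / 2)
  set LY := Real.log ((m + y) / 2)
  rw [div_le_iff₀ (by linarith : (0:ℝ) < y - x)]
  have e1 : m - x = w * (y - x) := by rw [hm]; ring
  have e2 : y - m = (1 - w) * (y - x) := by rw [hm]; ring
  have c1 : (1 - w) / w * ((m - x) * LX) = (1 - w) * (y - x) * LX := by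
    rw [e1]; field_simp
  have c2 : w / (1 - w) * ((y - m) * LY) = w * (y - x) * LY := by
    rw [e2]; field_simp
  have s1 := mul_le_mul_of_nonneg_left K1 (by positivity : (0:ℝ) ≤ (1 - w) / w)
  have s2 := mul_le_mul_of_nonneg_left K2 (by positivity : (0:ℝ) ≤ w / (1 - w))
  have hr : ((1 - w) * LX + w * LY) * (y - x)
      = (1 - w) * (y - x) * LX + w * (y - x) * LY := by ring
  rw [hr]
  linarith

/-- `I_v(a,b) ≤ (a∇_{v/2} b)^{1−v} (a∇_{(1+v)/2} b)^{v} ≤ a∇_v b`. -/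
theorem wId_le_wArith_refinement (a b v : ℝ) (ha : 0 < a) (hb : 0 < b) (hab : a ≠ b)
    (hv : v ∈ Set.Ioo (0 : ℝ) 1) :
    wId v a b ≤ wArith (v / 2) a b ^ (1 - v) * wArith ((1 + v) / 2) a b ^ v ∧
      wArith (v / 2) a b ^ (1 - v) * wArith ((1 + v) / 2) a b ^ v ≤ wArith v a b := by
  obtain ⟨hv0, hv1⟩ := hv
  have hv1' : 0 < 1 - v := by linarith
  have hba : b - a ≠ 0 := sub_ne_zero.mpr (Ne.symm hab)
  have hA : 0 < wArith v a b := by unfold wArith; nlinarith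
  have hX : 0 < wArith (v / 2) a b := by unfold wArith; nlinarith
  have hY : 0 < wArith ((1 + v) / 2) a b := by unfold wArith; nlinarith
  have hq : 0 < b ^ (v * b / (1 - v)) / a ^ ((1 - v) * a / v) :=
    div_pos (Real.rpow_pos_of_pos hb _) (Real.rpow_pos_of_pos ha _)
  have hwpos : 0 < wId v a b := by
    unfold wId
    exact mul_pos (mul_pos (Real.exp_pos _) (Real.rpow_pos_of_pos hA _))
      (Real.rpow_pos_of_pos hq _)
  have hlog : Real.log (wId v a b) =
      -1 + ((1 - 2 * v) * wArith v a b / (v * (1 - v) * (b - a))) * Real.log (wArith v a b)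
        + (b - a)⁻¹ * ((v * b / (1 - v)) * Real.log b - ((1 - v) * a / v) * Real.log a) := by
    unfold wId
    rw [Real.log_mul (by positivity) (by positivity),
      Real.log_mul (Real.exp_ne_zero _) (by positivity),
      Real.log_exp, Real.log_rpow hA, Real.log_rpow hq,
      Real.log_div (by positivity) (by positivity),
      Real.log_rpow hb, Real.log_rpow ha]
  have hvne : v ≠ 0 := hv0.ne'
  have hv1ne : (1:ℝ) - v ≠ 0 := hv1'.ne'
  constructor
  · -- first inequality, via logs
    have hmain : Real.log (wId v a b) ≤
        (1 - v) * Real.log (wArith (v / 2) a b) + v * Real.log (wArith ((1 + v) / 2) a b) := by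
      rcases lt_or_gt_of_ne hab with hlt | hgt
      · have H := wId_aux ha hlt hv0 hv1
        rw [show (a + ((1 - v) * a + v * b)) / 2 = wArith (v / 2) a b from by
            unfold wArith; ring,
          show (((1 - v) * a + v * b) + b) / 2 = wArith ((1 + v) / 2) a b from by
            unfold wArith; ring] at H
        refine le_trans (le_of_eq ?_) H
        rw [hlog]
        unfold wArith
        field_simp
        ring
      · have H := wId_aux hb hgt (by linarith : (0:ℝ) < 1 - v) (by linarith : 1 - v < 1)
        rw [show (1:ℝ) - (1 - v) = v from by ring] at H
        rw [show v * b + (1 - v) * a = (1 - v) * a + v * b from by ring] at H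
        rw [show (b + ((1 - v) * a + v * b)) / 2 = wArith ((1 + v) / 2) a b from by
            unfold wArith; ring,
          show (((1 - v) * a + v * b) + a) / 2 = wArith (v / 2) a b from by
            unfold wArith; ring] at H
        have H' : (v / (1 - v) * (((1 - v) * a + v * b) * Real.log ((1 - v) * a + v * b)
              - b * Real.log b - (((1 - v) * a + v * b) - b))
            + (1 - v) / v * (a * Real.log a
              - ((1 - v) * a + v * b) * Real.log ((1 - v) * a + v * b)
              - (a - ((1 - v) * a + v * b)))) / (a - b)
            ≤ (1 - v) * Real.log (wArith (v / 2) a b)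
              + v * Real.log (wArith ((1 + v) / 2) a b) := by linarith [H]
        refine le_trans (le_of_eq ?_) H'
        rw [hlog]
        have hab' : a - b ≠ 0 := sub_ne_zero.mpr hab
        unfold wArith
        field_simp
        ring
    calc wId v a b = Real.exp (Real.log (wId v a b)) := (Real.exp_log hwpos).symm
      _ ≤ Real.exp ((1 - v) * Real.log (wArith (v / 2) a b)
            + v * Real.log (wArith ((1 + v) / 2) a b)) := Real.exp_le_exp.mpr hmain
      _ = wArith (v / 2) a b ^ (1 - v) * wArith ((1 + v) / 2) a b ^ v := by
          rw [Real.exp_add, Real.rpow_def_of_pos hX, Real.rpow_def_of_pos hY]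
          ring_nf
  · have := Real.geom_mean_le_arith_mean2_weighted (by linarith : (0:ℝ) ≤ 1 - v)
      hv0.le hX.le hY.le (by ring)
    refine le_trans this (le_of_eq ?_)
    unfold wArith
    ring
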